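/- Janson's inequality implication: let {X_v}_{v∈V} be centered random variables with |X_v| ≤ b a.s., admitting a dependency graph G with chromatic number χ. If variables in distinct color classes of any proper χ-coloring with no edges between independent sets are mutually independent, then for all t > 0, P(|Σ_v X_v| > t) ≤ 2 exp(-t² / (2 χ |V| b²)). -/

import Mathlib

open MeasureTheory ProbabilityTheory Real

namespace JansonAux

variable {Ω : Type*} [MeasurableSpace Ω] {μ : Measure Ω} [IsProbabilityMeasure μ]

lemma integrable_exp_mul {Y : Ω → ℝ} (hY : Measurable Y) {b : ℝ}
    (hbd : ∀ᵐ ω ∂μ, |Y ω| ≤ b) (s : ℝ) :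
    Integrable (fun ω => exp (s * Y ω)) μ := by
  refine Integrable.mono' (integrable_const (exp (|s| * b)))
    ((hY.const_mul s).exp.aestronglyMeasurable) ?_
  filter_upwards [hbd] with ω h
  rw [Real.norm_of_nonneg (exp_pos _).le]
  refine exp_le_exp.2 ?_
  calc s * Y ω ≤ |s * Y ω| := le_abs_self _
    _ = |s| * |Y ω| := abs_mul _ _
    _ ≤ |s| * b := by gcongr

lemma hoeffding_mgf {Y : Ω → ℝ} (hY : Measurable Y) {b : ℝ} (hb : 0 < b)
    (hcent : ∫ ω, Y ω ∂μ = 0) (hbd : ∀ᵐ ω ∂μ, |Y ω| ≤ b) (s : ℝ) :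
    mgf Y μ s ≤ exp (s ^ 2 * b ^ 2 / 2) := by
  have h2b : (2 * b) ≠ 0 := by positivity
  have hYint : Integrable Y μ := by
    refine Integrable.mono' (integrable_const b) hY.aestronglyMeasurable ?_
    filter_upwards [hbd] with ω h using by simpa using h
  have hint := integrable_exp_mul hY hbd s
  set c1 := exp (-(s * b)) / (2 * b) with hc1
  set c2 := exp (s * b) / (2 * b) with hc2
  have key : ∀ᵐ ω ∂μ, exp (s * Y ω) ≤ c1 * (b - Y ω) + c2 * (b + Y ω) := by
    filter_upwards [hbd] with ω h
    have h1 : -b ≤ Y ω := neg_le_of_abs_le h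
    have h2 : Y ω ≤ b := le_of_abs_le h
    have ha : (0:ℝ) ≤ (b - Y ω) / (2 * b) := by
      apply div_nonneg <;> linarith
    have hb' : (0:ℝ) ≤ (b + Y ω) / (2 * b) := by
      apply div_nonneg <;> linarith
    have hab : (b - Y ω) / (2 * b) + (b + Y ω) / (2 * b) = 1 := by
      field_simp
      ring
    have hc := convexOn_exp.2 (Set.mem_univ (s * -b)) (Set.mem_univ (s * b)) ha hb' hab
    simp only [smul_eq_mul] at hc
    have harg : (b - Y ω) / (2 * b) * (s * -b) + (b + Y ω) / (2 * b) * (s * b) = s * Y ω := by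
      field_simp
      ring
    rw [harg] at hc
    calc exp (s * Y ω) ≤ (b - Y ω) / (2 * b) * exp (s * -b) + (b + Y ω) / (2 * b) * exp (s * b) :=
        hc
      _ = c1 * (b - Y ω) + c2 * (b + Y ω) := by
          rw [hc1, hc2]
          have : s * -b = -(s * b) := by ring
          rw [this]
          ring
  have hint2 : Integrable (fun ω => c1 * (b - Y ω) + c2 * (b + Y ω)) μ :=
    (((integrable_const b).sub hYint).const_mul c1).add
      (((integrable_const b).add hYint).const_mul c2)
  have hmono : mgf Y μ s ≤ ∫ ω, (c1 * (b - Y ω) + c2 * (b + Y ω)) ∂μ :=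
    integral_mono_ae hint hint2 key
  have hval : ∫ ω, (c1 * (b - Y ω) + c2 * (b + Y ω)) ∂μ = cosh (s * b) := by
    have hfe : (fun ω => c1 * (b - Y ω) + c2 * (b + Y ω))
        = fun ω => (c1 * b + c2 * b) + (c2 - c1) * Y ω := by
      funext ω; ring
    rw [hfe, integral_add (integrable_const _) (hYint.const_mul _),
      integral_const_mul, hcent, integral_const]
    simp only [measure_univ, probReal_univ, smul_eq_mul, one_mul, mul_zero, add_zero]
    rw [Real.cosh_eq, hc1, hc2]
    field_simp
    ring
  calc mgf Y μ s ≤ cosh (s * b) := hval ▸ hmono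
    _ ≤ exp ((s * b) ^ 2 / 2) := cosh_le_exp_half_sq _
    _ = exp (s ^ 2 * b ^ 2 / 2) := by rw [mul_pow]

end JansonAux

/-- Janson's inequality: if `{X_v}` are centered, a.s. bounded by `b`, and admit
a dependency graph `G` with chromatic number `χ` (families of variables indexed
by disjoint vertex sets with no edges between them are independent), then
`P(|∑ X_v| > t) ≤ 2 exp(-t² / (2 χ |V| b²))` for all `t > 0`. -/
theorem stmt_14 {Ω : Type*} [MeasurableSpace Ω] (μ : Measure Ω) [IsProbabilityMeasure μ]
    {V : Type*} [Fintype V] (X : V → Ω → ℝ) (b : ℝ) (hb : 0 < b)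
    (hmeas : ∀ v, Measurable (X v))
    (hcent : ∀ v, ∫ ω, X v ω ∂μ = 0)
    (hbd : ∀ v, ∀ᵐ ω ∂μ, |X v ω| ≤ b)
    (G : SimpleGraph V) (χ : ℕ) (hχ : G.chromaticNumber = (χ : ℕ∞))
    (hdep : ∀ U W : Set V, Disjoint U W →
      (∀ u ∈ U, ∀ w ∈ W, ¬ G.Adj u w) →
      Indep (⨆ u ∈ U, MeasurableSpace.comap (X u) inferInstance)
            (⨆ w ∈ W, MeasurableSpace.comap (X w) inferInstance) μ) :
    ∀ t : ℝ, 0 < t →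
      μ {ω | |∑ v, X v ω| > t}
        ≤ ENNReal.ofReal
            (2 * Real.exp (-(t ^ 2) / (2 * χ * Fintype.card V * b ^ 2))) := by
  classical
  intro t ht
  rcases isEmpty_or_nonempty V with hV | hV
  · have he : {ω : Ω | |∑ v, X v ω| > t} = ∅ := by
      ext ω
      simp only [Set.mem_setOf_eq, Set.mem_empty_iff_false, iff_false, not_lt, gt_iff_lt]
      rw [Finset.univ_eq_empty, Finset.sum_empty, abs_zero]
      exact ht.le
    rw [he]
    simp
  -- basic positivity facts
  obtain ⟨C⟩ : G.Colorable χ := SimpleGraph.chromaticNumber_le_iff_colorable.1 (le_of_eq hχ)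
  have hχ0 : 0 < χ := by
    rcases Nat.eq_zero_or_pos χ with h0 | h
    · subst h0; exact (C hV.some).elim0
    · exact h
  have hχR : (0:ℝ) < (χ : ℝ) := by exact_mod_cast hχ0
  set n := Fintype.card V with hn
  have hnpos : 0 < n := Fintype.card_pos
  have hnR : (0:ℝ) < (n : ℝ) := by exact_mod_cast hnpos
  set S : Ω → ℝ := fun ω => ∑ v, X v ω with hS
  have hSmeas : Measurable S := Finset.measurable_sum _ fun v _ => hmeas v
  have hSbd : ∀ᵐ ω ∂μ, |S ω| ≤ n * b := by
    filter_upwards [ae_all_iff.2 hbd] with ω h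
    calc |S ω| ≤ ∑ v, |X v ω| := Finset.abs_sum_le_sum_abs _ _
      _ ≤ ∑ _v : V, b := Finset.sum_le_sum fun v _ => h v
      _ = n * b := by rw [Finset.sum_const, Finset.card_univ, nsmul_eq_mul]
  have hSint : ∀ r : ℝ, Integrable (fun ω => exp (r * S ω)) μ := fun r =>
    JansonAux.integrable_exp_mul hSmeas hSbd r
  -- color classes
  set cls : Fin χ → Finset V := fun j => Finset.univ.filter fun v => C v = j with hcls
  have hfiber : ∀ ω, ∑ j, ∑ v ∈ cls j, X v ω = S ω := fun ω =>
    Finset.sum_fiberwise_of_maps_to (fun v _ => Finset.mem_univ (C v)) _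
  have hcard : ∑ j, (cls j).card = n :=
    (Finset.card_eq_sum_card_fiberwise (fun v (_ : v ∈ Finset.univ) => Finset.mem_univ (C v))).symm
  have hSjmeas : ∀ j, Measurable fun ω => ∑ v ∈ cls j, X v ω := fun j =>
    Finset.measurable_sum _ fun v _ => hmeas v
  have hSjbd : ∀ j : Fin χ, ∀ᵐ ω ∂μ, |∑ v ∈ cls j, X v ω| ≤ (cls j).card * b := by
    intro j
    filter_upwards [ae_all_iff.2 hbd] with ω h
    calc |∑ v ∈ cls j, X v ω| ≤ ∑ v ∈ cls j, |X v ω| := Finset.abs_sum_le_sum_abs _ _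
      _ ≤ ∑ _v ∈ cls j, b := Finset.sum_le_sum fun v _ => h v
      _ = (cls j).card * b := by rw [Finset.sum_const, nsmul_eq_mul]
  have hSjint : ∀ (j : Fin χ) (r : ℝ), Integrable (fun ω => exp (r * ∑ v ∈ cls j, X v ω)) μ :=
    fun j r => JansonAux.integrable_exp_mul (hSjmeas j) (hSjbd j) r
  -- mgf of a sum over pairwise non-adjacent vertices factors
  have hprod : ∀ s : Finset V, ((s : Set V)).Pairwise (fun u w => ¬ G.Adj u w) → ∀ r : ℝ,
      mgf (fun ω => ∑ v ∈ s, X v ω) μ r = ∏ v ∈ s, mgf (X v) μ r := by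
    intro s
    induction s using Finset.induction_on with
    | empty => intro _ r; simpa using mgf_zero_fun (μ := μ) (t := r)
    | @insert i s hi ih =>
      intro hpair r
      rw [Finset.coe_insert] at hpair
      have hpair' : ((s : Set V)).Pairwise (fun u w => ¬ G.Adj u w) :=
        hpair.mono (by intro x hx; exact Set.mem_insert_of_mem _ hx)
      have hnoadj : ∀ u ∈ ({i} : Set V), ∀ w ∈ (s : Set V), ¬ G.Adj u w := by
        intro u hu w hw
        rcases hu with rfl
        exact hpair (Set.mem_insert _ _) (Set.mem_insert_of_mem _ hw)
          (fun h => hi (h ▸ hw))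
      have hdisj : Disjoint ({i} : Set V) (s : Set V) :=
        Set.disjoint_singleton_left.2 (by exact_mod_cast hi)
      have hind : IndepFun (X i) (fun ω => ∑ v ∈ s, X v ω) μ := by
        rw [IndepFun_iff_Indep]
        have hd := hdep {i} (s : Set V) hdisj hnoadj
        refine indep_of_indep_of_le_right (indep_of_indep_of_le_left hd ?_) ?_
        · exact le_iSup₂ (f := fun u (_ : u ∈ ({i} : Set V)) =>
            MeasurableSpace.comap (X u) inferInstance) i rfl
        · refine measurable_iff_comap_le.1 ?_
          exact Finset.measurable_sum s fun w hw =>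
            measurable_iff_comap_le.2 (le_iSup₂ (f := fun w (_ : w ∈ (s : Set V)) =>
              MeasurableSpace.comap (X w) inferInstance) w (by exact_mod_cast hw))
      have haesm : ∀ (Y : Ω → ℝ), Measurable Y →
          AEStronglyMeasurable (fun ω => exp (r * Y ω)) μ := fun Y hY =>
        ((hY.const_mul r).exp).aestronglyMeasurable
      have hadd : mgf (X i + fun ω => ∑ v ∈ s, X v ω) μ r
          = mgf (X i) μ r * mgf (fun ω => ∑ v ∈ s, X v ω) μ r :=
        hind.mgf_add (haesm _ (hmeas i)) (haesm _ (Finset.measurable_sum _ fun v _ => hmeas v))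
      rw [Finset.prod_insert hi, ← ih hpair' r, ← hadd]
      congr 1
      funext ω
      simp [Finset.sum_insert hi]
  -- per-class mgf bound
  have hclassbd : ∀ (j : Fin χ) (r : ℝ),
      mgf (fun ω => ∑ v ∈ cls j, X v ω) μ r ≤ exp (r ^ 2 * b ^ 2 * (cls j).card / 2) := by
    intro j r
    have hpair : ((cls j : Set V)).Pairwise fun u w => ¬ G.Adj u w := by
      intro u hu w hw _ hadj
      have hne := C.valid hadj
      simp only [hcls, Finset.coe_filter, Set.mem_setOf_eq, Finset.mem_univ, true_and] at hu hw
      exact hne (hu.trans hw.symm)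
    rw [hprod _ hpair r]
    calc ∏ v ∈ cls j, mgf (X v) μ r ≤ ∏ _v ∈ cls j, exp (r ^ 2 * b ^ 2 / 2) :=
        Finset.prod_le_prod (fun v _ => mgf_nonneg)
          (fun v _ => JansonAux.hoeffding_mgf (hmeas v) hb (hcent v) (hbd v) r)
      _ = exp (r ^ 2 * b ^ 2 * (cls j).card / 2) := by
        rw [Finset.prod_const, ← Real.exp_nat_mul]
        congr 1
        ring
  -- Hölder: the mgf bound for the full sum
  have hmgfS : ∀ r : ℝ, mgf S μ r ≤ exp (r ^ 2 * ((χ : ℝ) * n * b ^ 2) / 2) := by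
    intro r
    have hp : ∑ _j : Fin χ, (χ : ℝ)⁻¹ = 1 := by
      rw [Finset.sum_const, Finset.card_univ, Fintype.card_fin, nsmul_eq_mul]
      field_simp
    have hH := ENNReal.lintegral_prod_norm_pow_le (μ := μ) Finset.univ
      (f := fun (j : Fin χ) ω => ENNReal.ofReal (exp (r * χ * ∑ v ∈ cls j, X v ω)))
      (fun j _ => (ENNReal.measurable_ofReal.comp
        (((hSjmeas j).const_mul (r * χ)).exp)).aemeasurable)
      (p := fun _ => (χ : ℝ)⁻¹) hp (fun _ _ => by positivity)
    have hLHS : ∀ ω, ∏ j : Fin χ,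
        (ENNReal.ofReal (exp (r * χ * ∑ v ∈ cls j, X v ω))) ^ ((χ : ℝ)⁻¹)
        = ENNReal.ofReal (exp (r * S ω)) := by
      intro ω
      have h1 : ∀ j : Fin χ,
          (ENNReal.ofReal (exp (r * χ * ∑ v ∈ cls j, X v ω))) ^ ((χ : ℝ)⁻¹)
          = ENNReal.ofReal (exp (r * ∑ v ∈ cls j, X v ω)) := by
        intro j
        rw [ENNReal.ofReal_rpow_of_pos (exp_pos _), ← Real.exp_mul]
        congr 1
        field_simp
      simp_rw [h1]
      rw [← ENNReal.ofReal_prod_of_nonneg (fun j _ => (exp_pos _).le), ← Real.exp_sum]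
      congr 1
      rw [← Finset.mul_sum, hfiber ω]
    have hL : ∫⁻ ω, ∏ j : Fin χ,
        (ENNReal.ofReal (exp (r * χ * ∑ v ∈ cls j, X v ω))) ^ ((χ : ℝ)⁻¹) ∂μ
        = ENNReal.ofReal (mgf S μ r) := by
      simp_rw [hLHS]
      rw [← ofReal_integral_eq_lintegral_ofReal (hSint r)
        (Filter.Eventually.of_forall fun ω => (exp_pos _).le)]
      rfl
    have hR : ∀ j : Fin χ, ∫⁻ ω, ENNReal.ofReal (exp (r * χ * ∑ v ∈ cls j, X v ω)) ∂μ
        = ENNReal.ofReal (mgf (fun ω => ∑ v ∈ cls j, X v ω) μ (r * χ)) := by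
      intro j
      rw [← ofReal_integral_eq_lintegral_ofReal (hSjint j (r * χ))
        (Filter.Eventually.of_forall fun ω => (exp_pos _).le)]
      rfl
    rw [hL] at hH
    simp_rw [hR] at hH
    have hRbd : ∏ j : Fin χ,
        (ENNReal.ofReal (mgf (fun ω => ∑ v ∈ cls j, X v ω) μ (r * χ))) ^ ((χ : ℝ)⁻¹)
        ≤ ENNReal.ofReal (exp (r ^ 2 * ((χ : ℝ) * n * b ^ 2) / 2)) := by
      calc ∏ j : Fin χ,
          (ENNReal.ofReal (mgf (fun ω => ∑ v ∈ cls j, X v ω) μ (r * χ))) ^ ((χ : ℝ)⁻¹)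
          ≤ ∏ j : Fin χ,
            (ENNReal.ofReal (exp ((r * χ) ^ 2 * b ^ 2 * (cls j).card / 2))) ^ ((χ : ℝ)⁻¹) := by
            refine Finset.prod_le_prod' fun j _ => ?_
            exact ENNReal.rpow_le_rpow (ENNReal.ofReal_le_ofReal (hclassbd j (r * χ)))
              (by positivity)
        _ = ENNReal.ofReal (exp (r ^ 2 * ((χ : ℝ) * n * b ^ 2) / 2)) := by
            have h1 : ∀ j : Fin χ,
                (ENNReal.ofReal (exp ((r * χ) ^ 2 * b ^ 2 * (cls j).card / 2))) ^ ((χ : ℝ)⁻¹)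
                = ENNReal.ofReal (exp ((r * χ) ^ 2 * b ^ 2 * (cls j).card / 2 * (χ : ℝ)⁻¹)) := by
              intro j
              rw [ENNReal.ofReal_rpow_of_pos (exp_pos _), ← Real.exp_mul]
            simp_rw [h1]
            rw [← ENNReal.ofReal_prod_of_nonneg (fun j _ => (exp_pos _).le), ← Real.exp_sum]
            congr 1
            have : ∑ j : Fin χ, (r * χ) ^ 2 * b ^ 2 * (cls j).card / 2 * (χ : ℝ)⁻¹
                = (r * χ) ^ 2 * b ^ 2 / 2 * (χ : ℝ)⁻¹ * (∑ j : Fin χ, ((cls j).card : ℝ)) := by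
              rw [Finset.mul_sum]
              refine Finset.sum_congr rfl fun j _ => by ring
            rw [this]
            have hcardR : (∑ j : Fin χ, ((cls j).card : ℝ)) = (n : ℝ) := by
              rw [← Nat.cast_sum, hcard]
            rw [hcardR]
            field_simp
    have := hH.trans hRbd
    exact (ENNReal.ofReal_le_ofReal_iff (exp_pos _).le).1 this
  -- Chernoff bounds
  set D : ℝ := (χ : ℝ) * n * b ^ 2 with hD
  have hDpos : 0 < D := by positivity
  set s0 : ℝ := t / D with hs0def
  have hs0 : 0 ≤ s0 := div_nonneg ht.le hDpos.le
  have hup : (μ {ω | t ≤ S ω}).toReal ≤ exp (-(t ^ 2) / (2 * D)) := by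
    calc (μ {ω | t ≤ S ω}).toReal ≤ exp (-s0 * t) * mgf S μ s0 :=
        measure_ge_le_exp_mul_mgf t hs0 (hSint s0)
      _ ≤ exp (-s0 * t) * exp (s0 ^ 2 * ((χ : ℝ) * n * b ^ 2) / 2) := by
          exact mul_le_mul_of_nonneg_left (hmgfS s0) (exp_pos _).le
      _ = exp (-(t ^ 2) / (2 * D)) := by
          rw [← Real.exp_add]
          congr 1
          rw [hs0def, hD]
          field_simp
          ring
  have hlow : (μ {ω | S ω ≤ -t}).toReal ≤ exp (-(t ^ 2) / (2 * D)) := by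
    calc (μ {ω | S ω ≤ -t}).toReal ≤ exp (-(-s0) * (-t)) * mgf S μ (-s0) :=
        measure_le_le_exp_mul_mgf (-t) (neg_nonpos.2 hs0) (hSint (-s0))
      _ ≤ exp (-(-s0) * (-t)) * exp ((-s0) ^ 2 * ((χ : ℝ) * n * b ^ 2) / 2) := by
          exact mul_le_mul_of_nonneg_left (hmgfS (-s0)) (exp_pos _).le
      _ = exp (-(t ^ 2) / (2 * D)) := by
          rw [← Real.exp_add]
          congr 1
          rw [hs0def, hD]
          field_simp
          ring
  have hsub : {ω | |S ω| > t} ⊆ {ω | t ≤ S ω} ∪ {ω | S ω ≤ -t} := by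
    intro ω hω
    simp only [Set.mem_setOf_eq, gt_iff_lt] at hω
    simp only [Set.mem_union, Set.mem_setOf_eq]
    rcases lt_abs.1 hω with h | h
    · exact Or.inl h.le
    · exact Or.inr (by linarith)
  have hfin : ∀ A : Set Ω, μ A ≠ ⊤ := fun A => measure_ne_top μ A
  calc μ {ω | |S ω| > t} ≤ μ ({ω | t ≤ S ω} ∪ {ω | S ω ≤ -t}) := measure_mono hsub
    _ ≤ μ {ω | t ≤ S ω} + μ {ω | S ω ≤ -t} := measure_union_le _ _
    _ ≤ ENNReal.ofReal (exp (-(t ^ 2) / (2 * D))) + ENNReal.ofReal (exp (-(t ^ 2) / (2 * D))) := by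
        refine add_le_add ?_ ?_
        · rw [← ENNReal.ofReal_toReal (hfin _)]
          exact ENNReal.ofReal_le_ofReal hup
        · rw [← ENNReal.ofReal_toReal (hfin _)]
          exact ENNReal.ofReal_le_ofReal hlow
    _ = ENNReal.ofReal (2 * Real.exp (-(t ^ 2) / (2 * (χ : ℝ) * n * b ^ 2))) := by
        rw [← ENNReal.ofReal_add (exp_pos _).le (exp_pos _).le]
        congr 1
        rw [two_mul]
        rw [hD]; ring_nf
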